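/- Suppose C has unique decomposition, f_C(α) > 1, and t is chosen so that η := Σ_{j=1}^t |C_j| e^{-jα} > 1. Then for every k there exists N with k ≤ N ≤ tk such that the number of distinct words of length N obtained as concatenations w_1⋯w_k with each w_i ∈ C of length ≤ t satisfies |L_N(X_C)| ≥ e^{Nα} η^k / (tk). -/

import Mathlib

open Filter Topology MeasureTheory

variable {A : Type*}

/-- The left shift on bi-infinite sequences. -/
def shift (x : ℤ → A) : ℤ → A := fun n => x (n + 1)

/-- The word `x([i, i+n))` read off from a point `x`. -/
def wordAt (x : ℤ → A) (i : ℤ) (n : ℕ) : List A :=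
  (List.range n).map fun j => x (i + j)

/-- A subshift: a closed, shift-invariant subset of the full shift. -/
def IsSubshift [TopologicalSpace A] (X : Set (ℤ → A)) : Prop :=
  IsClosed X ∧ ∀ x ∈ X, shift x ∈ X

/-- The set of words of length `n` appearing in points of `X`. -/
def language (X : Set (ℤ → A)) (n : ℕ) : Set (List A) :=
  {w | ∃ x ∈ X, ∃ i : ℤ, wordAt x i n = w}

/-- Topological entropy of a subshift, as a limsup. -/
noncomputable def entropy (X : Set (ℤ → A)) : ℝ :=
  Filter.limsup (fun n : ℕ => Real.log ((language X n).ncard) / n) Filter.atTop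

/-- The set `C_n` of code words of length `n`. -/
def Cwords (C : Set (List A)) (n : ℕ) : Set (List A) := {w ∈ C | w.length = n}

/-- The generating function `f_C(α) = ∑_{j ≥ 1} |C_j| e^{-jα}`, valued in `[0, ∞]`. -/
noncomputable def fC (C : Set (List A)) (α : ℝ) : ENNReal :=
  ∑' n : ℕ, ((Cwords C (n + 1)).ncard : ENNReal) *
    ENNReal.ofReal (Real.exp (-((n : ℝ) + 1) * α))

/-- The set `B_C` of bi-infinite concatenations of code words. -/
def Bset (C : Set (List A)) : Set (ℤ → A) :=
  {x | ∃ s : ℤ → ℤ, StrictMono s ∧ Tendsto s atTop atTop ∧ Tendsto s atBot atBot ∧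
    ∀ k : ℤ, wordAt x (s k) (s (k + 1) - s k).toNat ∈ C}

/-- The set `L_C` of limits of single code words. -/
def Lset (C : Set (List A)) : Set (ℤ → A) :=
  {x | ∀ k : ℕ, ∃ w ∈ C, wordAt x (-(k : ℤ)) (2 * k + 1) <:+: w}

/-- The coded subshift `X_C`, the closure of `B_C`. -/
def Xset [TopologicalSpace A] (C : Set (List A)) : Set (ℤ → A) := closure (Bset C)

/-- `C` has unique decomposition: no finite word is a concatenation of `C`-words
in two different ways. -/
def UniqueDecomposition (C : Set (List A)) : Prop :=
  ∀ l l' : List (List A), (∀ w ∈ l, w ∈ C) → (∀ w ∈ l', w ∈ C) →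
    l.flatten = l'.flatten → l = l'

/-- `n`-letter prefixes of words in `C`. -/
def Pn (C : Set (List A)) (n : ℕ) : Set (List A) :=
  {w | w.length = n ∧ ∃ v ∈ C, w <+: v}

/-- `n`-letter suffixes of words in `C`. -/
def Sn (C : Set (List A)) (n : ℕ) : Set (List A) :=
  {w | w.length = n ∧ ∃ v ∈ C, w <:+ v}

/-- `n`-letter subwords of words in `C`. -/
def Wn (C : Set (List A)) (n : ℕ) : Set (List A) :=
  {w | w.length = n ∧ ∃ v ∈ C, w <:+: v}

/-- The measure of the cylinder set of a word. -/
noncomputable def cylMeasure [MeasurableSpace A] (μ : Measure (ℤ → A)) (w : List A) : ℝ :=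
  (μ {x : ℤ → A | wordAt x 0 w.length = w}).toReal

/-- Measure-theoretic (Kolmogorov–Sinai) entropy of a shift-invariant measure. -/
noncomputable def measEntropy [MeasurableSpace A] [Fintype A] [DecidableEq A]
    (μ : Measure (ℤ → A)) : ℝ :=
  Filter.limsup (fun n : ℕ =>
    (-1 / (n : ℝ)) * ∑ w : Fin n → A,
      cylMeasure μ (List.ofFn w) * Real.log (cylMeasure μ (List.ofFn w))) Filter.atTop

lemma wordAt_length (x : ℤ → A) (i : ℤ) (n : ℕ) : (wordAt x i n).length = n := by
  simp [wordAt, Function.comp_def]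

lemma wordAt_getElem (x : ℤ → A) (i : ℤ) (n j : ℕ) (h : j < (wordAt x i n).length) :
    (wordAt x i n)[j] = x (i + (j : ℤ)) := by
  have hj : j < n := by rwa [wordAt_length] at h
  simp only [wordAt, List.getElem_map]
  congr 1
  simp [← List.map_eq_flatMap, List.getElem_range]

-- helper: strict mono int functions tend to infinity
lemma sm_tendsto_atTop (f : ℤ → ℤ) (hf : StrictMono f) : Tendsto f atTop atTop := by
  have key : ∀ n : ℤ, 0 ≤ n → f 0 + n ≤ f n := by
    refine Int.le_induction ?_ ?_
    · simp
    · intro n hn ih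
      have := hf (lt_add_one n)
      omega
  apply tendsto_atTop_atTop_of_monotone hf.monotone
  intro b
  refine ⟨max 0 (b - f 0), ?_⟩
  have h1 := key (max 0 (b - f 0)) (le_max_left _ _)
  have h2 := le_max_right 0 (b - f 0)
  omega

lemma sm_tendsto_atBot (f : ℤ → ℤ) (hf : StrictMono f) : Tendsto f atBot atBot := by
  have key : ∀ n : ℤ, 0 ≤ n → f (-n) ≤ f 0 - n := by
    refine Int.le_induction ?_ ?_
    · simp
    · intro n hn ih
      have h2 : f (-(n + 1)) < f (-n) := hf (by omega)
      omega
  apply tendsto_atBot_atBot_of_monotone hf.monotone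
  intro b
  refine ⟨-(max 0 (f 0 - b)), ?_⟩
  have h1 := key (max 0 (f 0 - b)) (le_max_left _ _)
  have h2 := le_max_right 0 (f 0 - b)
  omega

lemma flatten_mem_language' [TopologicalSpace A]
    (C : Set (List A)) (L : List (List A)) (hL : ∀ w ∈ L, w ∈ C)
    (hne : ∀ w ∈ L, w ≠ []) (hLne : L ≠ []) :
    L.flatten ∈ language (Xset C) L.flatten.length := by
  set F := L.flatten with hF
  set N := F.length with hNdef
  set k := L.length with hkdef
  clear_value F N k
  have hk : 0 < k := by rw [hkdef]; exact List.length_pos_iff.2 hLne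
  have hN : 0 < N := by
    rw [hNdef, hF]
    apply List.length_pos_iff.2
    intro h
    exact hne (L.head hLne) (L.head_mem hLne) (List.flatten_eq_nil_iff.1 h _ (L.head_mem hLne))
  have hNZ : (0:ℤ) < (N:ℤ) := by exact_mod_cast hN
  have hkZ : (0:ℤ) < (k:ℤ) := by exact_mod_cast hk
  -- partial sums
  set P : ℕ → ℕ := fun r => ((L.take r).flatten).length with hPdef
  clear_value P
  have hP0 : P 0 = 0 := by simp [hPdef]
  have hPk : P k = N := by
    simp only [hPdef, hkdef, List.take_length]
    rw [hNdef, hF]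
  have hsplit : ∀ r : ℕ, F = (L.take r).flatten ++ (L.drop r).flatten := by
    intro r; rw [hF, ← List.flatten_append, List.take_append_drop]
  have hPsucc : ∀ r (hr : r < k), P (r + 1) = P r + (L[r]'(by omega)).length := by
    intro r hr
    have h1 : L.take (r + 1) = L.take r ++ [L[r]'(by omega)] :=
      (List.take_concat_get' L r (by omega)).symm
    simp only [hPdef]
    rw [h1, List.flatten_append, List.length_append]
    simp
  have hPle : ∀ r, P r ≤ N := by
    intro r
    have h2 : N = P r + ((L.drop r).flatten).length := by
      rw [hNdef, hsplit r, List.length_append]; simp [hPdef]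
    omega
  have hdropF : ∀ r, F.drop (P r) = (L.drop r).flatten := by
    intro r
    simp only [hPdef]
    conv_lhs => rw [hsplit r]
    exact List.drop_left
  -- the basic getElem fact
  have hFget : ∀ (r : ℕ) (hr : r < k) (j : ℕ) (hj : j < (L[r]'(by omega)).length)
      (h' : P r + j < N),
      F[P r + j]'(by omega) = (L[r]'(by omega))[j]'hj := by
    intro r hr j hj h'
    have h2 : F.drop (P r) = (L[r]'(by omega)) ++ (L.drop (r + 1)).flatten := by
      rw [hdropF, List.drop_eq_getElem_cons (by omega : r < L.length)]
      rfl
    have hjd : j < (F.drop (P r)).length := by rw [h2]; simp; omega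
    have h3 : (F.drop (P r))[j]'hjd = F[P r + j]'(by omega) := List.getElem_drop
    rw [← h3]
    have h4 : (F.drop (P r))[j]'hjd
        = ((L[r]'(by omega)) ++ (L.drop (r + 1)).flatten)[j]'(by simp; omega) := by
      congr 1
    rw [h4, List.getElem_append_left hj]
  -- the periodic point
  set x : ℤ → A := fun m => F.get ⟨(m % (N:ℤ)).toNat, by
    have h1 := Int.emod_nonneg m (by omega : (N:ℤ) ≠ 0)
    have h2 := Int.emod_lt_of_pos m hNZ
    omega⟩ with hxdef
  have hx : ∀ (q : ℤ) (c : ℕ) (hc : c < N), x (q * N + c) = F[c]'(by omega) := by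
    intro q c hc
    have he : ((q * (N:ℤ) + c) % N).toNat = c := by
      have h1 : (q * (N:ℤ) + c) % N = (c:ℤ) % N := by
        rw [add_comm, mul_comm, Int.add_mul_emod_self_left]
      have h2 : (c:ℤ) % N = c := Int.emod_eq_of_lt (by omega) (by exact_mod_cast hc)
      omega
    show F.get _ = _
    rw [List.get_eq_getElem]
    congr 1
  -- the cut points
  set s : ℤ → ℤ := fun m => (m / (k:ℤ)) * N + (P (m % (k:ℤ)).toNat : ℤ) with hsdef
  have hrlt : ∀ m : ℤ, (m % (k:ℤ)).toNat < k := by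
    intro m
    have h1 := Int.emod_nonneg m (by omega : (k:ℤ) ≠ 0)
    have h2 := Int.emod_lt_of_pos m hkZ
    omega
  have hstep : ∀ m : ℤ, s (m + 1) = (m / (k:ℤ)) * N + (P ((m % (k:ℤ)).toNat + 1) : ℤ) := by
    intro m
    have hmeq := Int.emod_add_mul_ediv m (k:ℤ)
    have h1 := Int.emod_nonneg m (by omega : (k:ℤ) ≠ 0)
    have h2 := Int.emod_lt_of_pos m hkZ
    rcases lt_or_eq_of_le (by omega : m % (k:ℤ) + 1 ≤ (k:ℤ)) with hlt | heq
    · have hm1 : m + 1 = (m % (k:ℤ) + 1) + (m / (k:ℤ)) * (k:ℤ) := by linarith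
      have e1 : (m + 1) / (k:ℤ) = m / (k:ℤ) := by
        rw [hm1, Int.add_mul_ediv_right _ _ (by omega : (k:ℤ) ≠ 0),
          Int.ediv_eq_zero_of_lt (by omega) hlt, zero_add]
      have e3 : ((m + 1) % (k:ℤ)).toNat = (m % (k:ℤ)).toNat + 1 := by
        have e2 : (m + 1) % (k:ℤ) = m % (k:ℤ) + 1 := by
          rw [hm1, Int.add_mul_emod_self_right, Int.emod_eq_of_lt (by omega) hlt]
        omega
      rw [hsdef]; simp only [e1, e3]
    · have hm1 : m + 1 = (k:ℤ) * (m / (k:ℤ) + 1) := by linarith [heq]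
      have e1 : (m + 1) / (k:ℤ) = m / (k:ℤ) + 1 := by
        rw [hm1, Int.mul_ediv_cancel_left _ (by omega : (k:ℤ) ≠ 0)]
      have e2 : (m + 1) % (k:ℤ) = 0 := by rw [hm1, Int.mul_emod_right]
      have e4 : (m % (k:ℤ)).toNat + 1 = k := by omega
      rw [hsdef]; simp only [e1, e2, e4, hPk]
      push_cast [hP0]
      ring
  have hdiff : ∀ m : ℤ, s (m + 1) - s m
      = ((L[(m % (k:ℤ)).toNat]'(by have := hrlt m; omega)).length : ℤ) := by
    intro m
    rw [hstep m, hPsucc _ (hrlt m)]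
    simp only [hsdef]
    push_cast
    ring
  have hlen_pos : ∀ m : ℤ, 0 < (L[(m % (k:ℤ)).toNat]'(by have := hrlt m; omega)).length := by
    intro m
    exact List.length_pos_iff.2 (hne _ (List.getElem_mem _))
  have hmono : StrictMono s := by
    apply strictMono_int_of_lt_succ
    intro m
    have := hdiff m
    have := hlen_pos m
    omega
  -- word blocks
  have hword : ∀ (q : ℤ) (r : ℕ) (hr : r < k),
      wordAt x (q * N + P r) (L[r]'(by omega)).length = L[r]'(by omega) := by
    intro q r hr
    apply List.ext_getElem
    · rw [wordAt_length]
    · intro j h1 h2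
      have hj : j < (L[r]'(by omega)).length := by rwa [wordAt_length] at h1
      have hPj : P r + j < N := by
        have := hPsucc r hr
        have := hPle (r + 1)
        omega
      rw [wordAt_getElem x _ _ j h1]
      have he : (q * (N:ℤ) + (P r : ℤ)) + (j : ℤ) = q * N + ((P r + j : ℕ) : ℤ) := by
        push_cast; ring
      rw [he, hx q (P r + j) hPj]
      exact hFget r hr j hj hPj
  have hxB : x ∈ Bset C := by
    refine ⟨s, hmono, sm_tendsto_atTop s hmono, sm_tendsto_atBot s hmono, ?_⟩
    intro m
    have h1 : (s (m + 1) - s m).toNat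
        = (L[(m % (k:ℤ)).toNat]'(by have := hrlt m; omega)).length := by
      have := hdiff m; omega
    rw [h1]
    have h2 : s m = (m / (k:ℤ)) * N + P (m % (k:ℤ)).toNat := rfl
    rw [h2, hword (m / (k:ℤ)) _ (hrlt m)]
    exact hL _ (List.getElem_mem _)
  refine ⟨x, subset_closure hxB, 0, ?_⟩
  apply List.ext_getElem
  · rw [wordAt_length]; omega
  · intro j h1 h2
    have hj : j < N := by rwa [wordAt_length] at h1
    rw [wordAt_getElem x 0 N j h1]
    have he : (0 : ℤ) + (j:ℤ) = 0 * N + (j:ℤ) := by ring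
    rw [he, hx 0 j hj]

/-- under unique decomposition, `f_C(α) > 1` and
`η = ∑_{j=1}^t |C_j| e^{-jα} > 1`, for every `k ≥ 1` there is `N` with
`k ≤ N ≤ tk` and `|L_N(X_C)| ≥ e^{Nα} η^k / (tk)`. -/
theorem stmt13 [Fintype A] [TopologicalSpace A] [DiscreteTopology A]
    (C : Set (List A)) (α : ℝ) (t : ℕ) (η : ℝ)
    (hUD : UniqueDecomposition C) (hf : 1 < fC C α)
    (hη : η = ∑ j ∈ Finset.Icc 1 t, ((Cwords C j).ncard : ℝ) * Real.exp (-(j : ℝ) * α))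
    (h1 : 1 < η) :
    ∀ k : ℕ, 1 ≤ k → ∃ N : ℕ, k ≤ N ∧ N ≤ t * k ∧
      Real.exp ((N : ℝ) * α) * η ^ k / (t * k) ≤ ((language (Xset C) N).ncard : ℝ) := by
  classical
  intro k hk
  have ht : 1 ≤ t := by
    by_contra h
    have h0 : t = 0 := by omega
    rw [h0] at hη
    simp at hη
    rw [hη] at h1
    linarith
  have hfin : ∀ j, (Cwords C j).Finite := fun j =>
    (List.finite_length_eq A j).subset (fun w hw => hw.2)
  set W : ℕ → Finset (List A) := fun j => (hfin j).toFinset with hW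
  have hWmem : ∀ j w, w ∈ W j ↔ w ∈ C ∧ w.length = j := by
    intro j w
    simp [hW, Set.Finite.mem_toFinset, Cwords]
  have hcard : ∀ j, (Cwords C j).ncard = (W j).card := fun j =>
    Set.ncard_eq_toFinset_card _ (hfin j)
  set PF : Finset (Fin k → ℕ) := Fintype.piFinset (fun _ : Fin k => Finset.Icc 1 t) with hPF
  -- step 1: expand η ^ k
  have step1 : η ^ k = ∑ g ∈ PF, ∏ i : Fin k,
      (((W (g i)).card : ℝ) * Real.exp (-(g i : ℝ) * α)) := by
    rw [hη]
    simp_rw [hcard]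
    have e1 : (∑ j ∈ Finset.Icc 1 t, ((W j).card : ℝ) * Real.exp (-(j : ℝ) * α)) ^ k
        = ∏ _i : Fin k, ∑ j ∈ Finset.Icc 1 t, (((W j).card : ℝ) * Real.exp (-(j : ℝ) * α)) := by
      rw [Finset.prod_const, Finset.card_univ, Fintype.card_fin]
    rw [e1, Finset.prod_univ_sum]
  -- step 2: per-profile factorization
  have step2 : ∀ g : Fin k → ℕ,
      (∏ i : Fin k, (((W (g i)).card : ℝ) * Real.exp (-(g i : ℝ) * α)))
      = Real.exp (-((∑ i : Fin k, g i : ℕ) : ℝ) * α) * ∏ i : Fin k, ((W (g i)).card : ℝ) := by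
    intro g
    rw [Finset.prod_mul_distrib, mul_comm]
    congr 1
    rw [← Real.exp_sum]
    congr 1
    push_cast
    rw [neg_mul, Finset.sum_mul, ← Finset.sum_neg_distrib]
    simp [neg_mul]
  -- step 3: profile sums land in Icc k (t*k)
  have step3 : ∀ g ∈ PF, (∑ i : Fin k, g i) ∈ Finset.Icc k (t * k) := by
    intro g hg
    rw [hPF, Fintype.mem_piFinset] at hg
    rw [Finset.mem_Icc]
    constructor
    · calc k = ∑ _i : Fin k, 1 := by simp
        _ ≤ ∑ i, g i := Finset.sum_le_sum (fun i _ => (Finset.mem_Icc.1 (hg i)).1)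
    · calc ∑ i, g i ≤ ∑ _i : Fin k, t :=
            Finset.sum_le_sum (fun i _ => (Finset.mem_Icc.1 (hg i)).2)
        _ = t * k := by simp [mul_comm]
  -- the fiberwise sums
  have step4 : η ^ k = ∑ N ∈ Finset.Icc k (t * k), Real.exp (-(N:ℝ) * α) *
      (∑ g ∈ PF.filter (fun g => ∑ i : Fin k, g i = N),
        ∏ i : Fin k, ((W (g i)).card : ℝ)) := by
    rw [step1, ← Finset.sum_fiberwise_of_maps_to step3]
    apply Finset.sum_congr rfl
    intro N _
    rw [Finset.mul_sum]
    apply Finset.sum_congr rfl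
    intro g hg
    rw [Finset.mem_filter] at hg
    rw [step2 g, hg.2]
  -- finiteness of languages
  have hlangfin : ∀ N : ℕ, (language (Xset C) N).Finite := by
    intro N
    apply (List.finite_length_eq A N).subset
    rintro w ⟨x, _, i, rfl⟩
    exact wordAt_length x i N
  -- step 5: counting bound
  have step5 : ∀ N, (∑ g ∈ PF.filter (fun g => ∑ i : Fin k, g i = N),
      ∏ i : Fin k, ((W (g i)).card : ℝ)) ≤ ((language (Xset C) N).ncard : ℝ) := by
    intro N
    have hdisj : ∀ p ∈ PF.filter (fun g => ∑ i : Fin k, g i = N),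
        ∀ p' ∈ PF.filter (fun g => ∑ i : Fin k, g i = N), p ≠ p' →
        Disjoint (Fintype.piFinset (fun i => W (p i)))
                 (Fintype.piFinset (fun i => W (p' i))) := by
      intro p _ p' _ hpne
      rw [Finset.disjoint_left]
      intro q hq hq'
      apply hpne
      funext i
      rw [Fintype.mem_piFinset] at hq hq'
      have e1 := ((hWmem _ _).1 (hq i)).2
      have e2 := ((hWmem _ _).1 (hq' i)).2
      omega
    have hcardB : ((PF.filter (fun g => ∑ i : Fin k, g i = N)).biUnion
          (fun p => Fintype.piFinset (fun i => W (p i)))).card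
        = ∑ p ∈ PF.filter (fun g => ∑ i : Fin k, g i = N), ∏ i : Fin k, (W (p i)).card := by
      rw [Finset.card_biUnion hdisj]
      apply Finset.sum_congr rfl
      intro p _
      rw [Fintype.card_piFinset]
    set B := (PF.filter (fun g => ∑ i : Fin k, g i = N)).biUnion
        (fun p => Fintype.piFinset (fun i => W (p i))) with hB
    have hBC : ∀ q ∈ B, ∀ w ∈ List.ofFn q, w ∈ C := by
      intro q hq w hw
      rw [hB, Finset.mem_biUnion] at hq
      obtain ⟨p, _, hq⟩ := hq
      rw [Fintype.mem_piFinset] at hq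
      rw [List.mem_ofFn] at hw
      obtain ⟨i, rfl⟩ := hw
      exact ((hWmem _ _).1 (hq i)).1
    have hinj : Set.InjOn (fun q : Fin k → List A => (List.ofFn q).flatten) B := by
      intro q hq q' hq' he
      exact List.ofFn_injective (hUD _ _ (hBC q hq) (hBC q' hq') he)
    have hsub : ∀ w ∈ B.image (fun q => (List.ofFn q).flatten),
        w ∈ language (Xset C) N := by
      intro w hw
      rw [Finset.mem_image] at hw
      obtain ⟨q, hq, rfl⟩ := hw
      have hqB := hq
      rw [hB, Finset.mem_biUnion] at hq
      obtain ⟨p, hp, hq⟩ := hq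
      rw [Finset.mem_filter] at hp
      rw [Fintype.mem_piFinset] at hq
      have hp1 : ∀ i, p i ∈ Finset.Icc 1 t := by
        have := hp.1
        rw [hPF, Fintype.mem_piFinset] at this
        exact this
      have hlenq : ∀ i, (q i).length = p i := fun i => ((hWmem _ _).1 (hq i)).2
      have hlen : (List.ofFn q).flatten.length = N := by
        rw [List.length_flatten, List.map_ofFn, List.sum_ofFn, ← hp.2]
        apply Finset.sum_congr rfl
        intro i _
        exact hlenq i
      have hmem := flatten_mem_language' C (List.ofFn q)
        (hBC q hqB)
        (by
          intro w hw
          rw [List.mem_ofFn] at hw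
          obtain ⟨i, rfl⟩ := hw
          have h5 := (Finset.mem_Icc.1 (hp1 i)).1
          have h6 := hlenq i
          intro hnil
          have h8 : p i = 0 := by rw [← h6, hnil]; rfl
          simp [h8] at h5)
        (by
          intro hnil
          have h7 : (List.ofFn q).length = k := by simp
          have h8 : k = 0 := by rw [← h7, hnil]; rfl
          simp [h8] at hk)
      rwa [hlen] at hmem
    have hle1 : (B.image (fun q => (List.ofFn q).flatten)).card
        ≤ (language (Xset C) N).ncard := by
      rw [← Set.ncard_coe_finset]
      exact Set.ncard_le_ncard (fun w hw => hsub w hw) (hlangfin N)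
    have hle2 : B.card ≤ (language (Xset C) N).ncard := by
      rwa [Finset.card_image_of_injOn hinj] at hle1
    calc (∑ g ∈ PF.filter (fun g => ∑ i : Fin k, g i = N),
        ∏ i : Fin k, ((W (g i)).card : ℝ))
        = ((∑ p ∈ PF.filter (fun g => ∑ i : Fin k, g i = N),
            ∏ i : Fin k, (W (p i)).card : ℕ) : ℝ) := by push_cast; rfl
      _ = (B.card : ℝ) := by rw [← hcardB]
      _ ≤ ((language (Xset C) N).ncard : ℝ) := by exact_mod_cast hle2
  -- pigeonhole
  have hkt : k ≤ t * k := by nlinarith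
  have hIccne : (Finset.Icc k (t * k)).Nonempty := Finset.nonempty_Icc.2 hkt
  have hcpos : 0 < (Finset.Icc k (t * k)).card := Finset.Nonempty.card_pos hIccne
  have hcle : (Finset.Icc k (t * k)).card ≤ t * k := by
    rw [Nat.card_Icc]
    omega
  have hηpos : (0:ℝ) < η ^ k := pow_pos (by linarith) k
  have hsum_le : ∑ _N ∈ Finset.Icc k (t * k), η ^ k / ((Finset.Icc k (t * k)).card : ℝ)
      ≤ ∑ N ∈ Finset.Icc k (t * k),
        Real.exp (-(N:ℝ) * α) * ((language (Xset C) N).ncard : ℝ) := by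
    rw [Finset.sum_const, nsmul_eq_mul, mul_div_cancel₀ _ (by positivity : ((Finset.Icc k (t * k)).card : ℝ) ≠ 0)]
    rw [step4]
    apply Finset.sum_le_sum
    intro N _
    exact mul_le_mul_of_nonneg_left (step5 N) (Real.exp_nonneg _)
  obtain ⟨N, hNmem, hineq⟩ := Finset.exists_le_of_sum_le hIccne hsum_le
  rw [Finset.mem_Icc] at hNmem
  refine ⟨N, hNmem.1, hNmem.2, ?_⟩
  have htkpos : (0:ℝ) < (t:ℝ) * (k:ℝ) := by
    have : 0 < t * k := by positivity
    exact_mod_cast this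
  have h2 : η ^ k / ((t:ℝ) * (k:ℝ)) ≤ η ^ k / ((Finset.Icc k (t * k)).card : ℝ) := by
    apply div_le_div_of_nonneg_left hηpos.le
    · exact_mod_cast hcpos
    · exact_mod_cast hcle
  have h3 : η ^ k / ((t:ℝ) * (k:ℝ))
      ≤ Real.exp (-(N:ℝ) * α) * ((language (Xset C) N).ncard : ℝ) := le_trans h2 hineq
  calc Real.exp ((N:ℝ) * α) * η ^ k / ((t:ℝ) * (k:ℝ))
      = Real.exp ((N:ℝ) * α) * (η ^ k / ((t:ℝ) * (k:ℝ))) := by ring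
    _ ≤ Real.exp ((N:ℝ) * α) * (Real.exp (-(N:ℝ) * α) * ((language (Xset C) N).ncard : ℝ)) :=
        mul_le_mul_of_nonneg_left h3 (Real.exp_nonneg _)
    _ = ((language (Xset C) N).ncard : ℝ) := by
        rw [← mul_assoc, ← Real.exp_add]
        have : (N:ℝ) * α + -(N:ℝ) * α = 0 := by ring
        rw [this, Real.exp_zero, one_mul]
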